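/- Let R > 0, h > 0, and 0 < η < π/4. Then there exists k_crit > 0 such that for every gain 0 < k < k_crit there exists a constant 0 ≤ c < 1 such that for every x ∈ [−R, R], the map g(φ) = φ + h·k·(2·sin φ·(R + cos φ) − 2·x·cos φ)/(sin²φ − cos²φ) satisfies |g(φ₁) − g(φ₂)| ≤ c·|φ₁ − φ₂| for all φ₁, φ₂ ∈ [−π/4 + η, π/4 − η]; that is, g is a contraction on this interval, uniformly in x ∈ [−R, R]. -/

import Mathlib

open Real

set_option maxHeartbeats 1000000 in
private lemma heading_aux (R x s c ε u : ℝ) (hR : 0 < R) (hx1 : -R ≤ x) (hx2 : x ≤ R)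
    (hpyth : s ^ 2 + c ^ 2 = 1) (hc : 0 < c) (hd : ε ≤ c ^ 2 - s ^ 2) (hε : 0 < ε)
    (hε1 : ε ≤ 1) (hu : 0 < u) (huL : u * (8 + 12 * R) < ε ^ 2) :
    |1 + ((u * (2 * c * (R + c) + 2 * s * (-s) - 2 * x * (-s))) * (s ^ 2 - c ^ 2) -
        (u * (2 * s * (R + c) - 2 * x * c)) * (2 * s * c - 2 * c * (-s))) /
        (s ^ 2 - c ^ 2) ^ 2| ≤ 1 - 2 * u := by
  have hsabs : |s| ≤ c := by
    rw [abs_le]; constructor <;> nlinarith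
  have habsnn := abs_nonneg s
  have hsq := sq_abs s
  have hval : ((u * (2 * c * (R + c) + 2 * s * (-s) - 2 * x * (-s))) * (s ^ 2 - c ^ 2) -
      (u * (2 * s * (R + c) - 2 * x * c)) * (2 * s * c - 2 * c * (-s))) /
      (s ^ 2 - c ^ 2) ^ 2 =
      u * (-(2 * R) * (c * (c ^ 2 + 3 * s ^ 2)) + 2 * (x * s) * (s ^ 2 + 3 * c ^ 2) -
        2 * (s ^ 2 + c ^ 2) ^ 2) / (s ^ 2 - c ^ 2) ^ 2 := by
    ring
  have hc1 : c ≤ 1 := by nlinarith [sq_nonneg s]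
  have hs1 : |s| ≤ 1 := le_trans hsabs hc1
  have hxabs : |x| ≤ R := abs_le.mpr ⟨hx1, hx2⟩
  have hxs : x * s ≤ R * |s| := by
    calc x * s ≤ |x * s| := le_abs_self _
      _ = |x| * |s| := abs_mul x s
      _ ≤ R * |s| := mul_le_mul_of_nonneg_right hxabs habsnn
  have hxs2 : -(R * |s|) ≤ x * s := by
    have h1 : |x * s| ≤ R * |s| := by
      rw [abs_mul]; exact mul_le_mul_of_nonneg_right hxabs habsnn
    have := neg_abs_le (x * s)
    linarith
  have hnn3 : (0 : ℝ) ≤ s ^ 2 + 3 * c ^ 2 := by positivity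
  have h2sc : 2 * |s| * c ≤ 1 := by nlinarith [sq_nonneg (|s| - c)]
  have keymul : 0 ≤ (c - |s|) * (1 - 2 * |s| * c) :=
    mul_nonneg (by linarith) (by linarith)
  have key : |s| * (s ^ 2 + 3 * c ^ 2) ≤ c * (c ^ 2 + 3 * s ^ 2) := by nlinarith [keymul]
  have hd2 : ε ^ 2 ≤ (s ^ 2 - c ^ 2) ^ 2 := by nlinarith [mul_self_le_mul_self hε.le hd]
  have hd2pos : 0 < (s ^ 2 - c ^ 2) ^ 2 := by nlinarith
  have hB1 : -(2 * R) * (c * (c ^ 2 + 3 * s ^ 2)) + 2 * (x * s) * (s ^ 2 + 3 * c ^ 2) -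
      2 * (s ^ 2 + c ^ 2) ^ 2 ≤ -2 * (s ^ 2 - c ^ 2) ^ 2 := by
    have m1 : 2 * (x * s) * (s ^ 2 + 3 * c ^ 2) ≤ 2 * (R * |s|) * (s ^ 2 + 3 * c ^ 2) := by
      have := mul_le_mul_of_nonneg_right hxs hnn3; nlinarith
    have m2 : R * (|s| * (s ^ 2 + 3 * c ^ 2)) ≤ R * (c * (c ^ 2 + 3 * s ^ 2)) :=
      mul_le_mul_of_nonneg_left key hR.le
    have d4 : (s ^ 2 - c ^ 2) ^ 2 ≤ (s ^ 2 + c ^ 2) ^ 2 := by nlinarith [sq_nonneg (s * c)]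
    nlinarith [m1, m2, d4]
  have hB2 : -(8 + 12 * R) ≤ -(2 * R) * (c * (c ^ 2 + 3 * s ^ 2)) +
      2 * (x * s) * (s ^ 2 + 3 * c ^ 2) - 2 * (s ^ 2 + c ^ 2) ^ 2 := by
    have e1 : c * (c ^ 2 + 3 * s ^ 2) ≤ 3 := by
      nlinarith [mul_nonneg (sub_nonneg.mpr hc1) (by positivity : (0:ℝ) ≤ c ^ 2 + 3 * s ^ 2)]
    have e2 : |s| * (s ^ 2 + 3 * c ^ 2) ≤ 3 := by
      nlinarith [mul_nonneg (sub_nonneg.mpr hs1) hnn3]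
    have m1 : -(R * |s|) * (s ^ 2 + 3 * c ^ 2) ≤ x * s * (s ^ 2 + 3 * c ^ 2) :=
      mul_le_mul_of_nonneg_right hxs2 hnn3
    have m2 : R * (|s| * (s ^ 2 + 3 * c ^ 2)) ≤ R * 3 := mul_le_mul_of_nonneg_left e2 hR.le
    have m3 : R * (c * (c ^ 2 + 3 * s ^ 2)) ≤ R * 3 := mul_le_mul_of_nonneg_left e1 hR.le
    nlinarith [m1, m2, m3]
  rw [hval, abs_le]
  constructor
  · have h1 : -1 ≤ u * (-(2 * R) * (c * (c ^ 2 + 3 * s ^ 2)) + 2 * (x * s) * (s ^ 2 + 3 * c ^ 2) -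
        2 * (s ^ 2 + c ^ 2) ^ 2) / (s ^ 2 - c ^ 2) ^ 2 := by
      rw [le_div_iff₀ hd2pos]
      nlinarith [mul_le_mul_of_nonneg_left hB2 hu.le]
    have h3 : 2 * u ≤ 1 := by nlinarith
    linarith
  · have h1 : u * (-(2 * R) * (c * (c ^ 2 + 3 * s ^ 2)) + 2 * (x * s) * (s ^ 2 + 3 * c ^ 2) -
        2 * (s ^ 2 + c ^ 2) ^ 2) / (s ^ 2 - c ^ 2) ^ 2 ≤ -(2 * u) := by
      rw [div_le_iff₀ hd2pos]
      nlinarith [mul_le_mul_of_nonneg_left hB1 hu.le]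
    linarith

/-- For every sufficiently small gain `k`, the one-step heading-update map `g` is a
contraction on `[-π/4 + η, π/4 - η]`, uniformly in the lateral position `x ∈ [-R, R]`. -/
theorem heading_map_contraction (R h η : ℝ) (hR : 0 < R) (hh : 0 < h)
    (hη : 0 < η) (hη' : η < π / 4) :
    ∃ kcrit > (0 : ℝ), ∀ k : ℝ, 0 < k → k < kcrit →
      ∃ c : ℝ, 0 ≤ c ∧ c < 1 ∧
        ∀ x ∈ Set.Icc (-R) R,
          ∀ φ₁ ∈ Set.Icc (-(π / 4) + η) (π / 4 - η),
            ∀ φ₂ ∈ Set.Icc (-(π / 4) + η) (π / 4 - η),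
              |(φ₁ + h * k * (2 * Real.sin φ₁ * (R + Real.cos φ₁) - 2 * x * Real.cos φ₁) /
                    (Real.sin φ₁ ^ 2 - Real.cos φ₁ ^ 2)) -
                (φ₂ + h * k * (2 * Real.sin φ₂ * (R + Real.cos φ₂) - 2 * x * Real.cos φ₂) /
                    (Real.sin φ₂ ^ 2 - Real.cos φ₂ ^ 2))| ≤ c * |φ₁ - φ₂| := by
  have hπ := Real.pi_pos
  set ε := Real.sin (2 * η) with hεdef
  have hεpos : 0 < ε := Real.sin_pos_of_pos_of_lt_pi (by linarith) (by linarith)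
  have hε1 : ε ≤ 1 := Real.sin_le_one _
  refine ⟨ε ^ 2 / (h * (8 + 12 * R)), by positivity, ?_⟩
  intro k hk hk'
  have hupos : 0 < h * k := by positivity
  have hu : h * k * (8 + 12 * R) < ε ^ 2 := by
    rw [lt_div_iff₀ (by positivity)] at hk'
    nlinarith
  refine ⟨1 - 2 * (h * k), by nlinarith, by nlinarith, ?_⟩
  intro x hx φ₁ hφ₁ φ₂ hφ₂
  obtain ⟨hx1, hx2⟩ := hx
  have hfacts : ∀ φ ∈ Set.Icc (-(π / 4) + η) (π / 4 - η),
      ε ≤ Real.cos φ ^ 2 - Real.sin φ ^ 2 ∧ 0 < Real.cos φ := by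
    intro φ hφ
    obtain ⟨h1, h2⟩ := hφ
    have habs : |2 * φ| ≤ π / 2 - 2 * η := by
      rw [abs_le]; constructor <;> linarith
    have hcos : Real.cos (π / 2 - 2 * η) ≤ Real.cos |2 * φ| :=
      Real.cos_le_cos_of_nonneg_of_le_pi (abs_nonneg _) (by linarith) habs
    rw [Real.cos_abs, Real.cos_pi_div_two_sub] at hcos
    have hsq : Real.cos (2 * φ) = 2 * Real.cos φ ^ 2 - 1 := Real.cos_two_mul φ
    have hpyth := Real.sin_sq_add_cos_sq φ
    have hd : ε ≤ Real.cos φ ^ 2 - Real.sin φ ^ 2 := by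
      rw [hεdef]; linarith
    have hcnn : 0 ≤ Real.cos φ := Real.cos_nonneg_of_mem_Icc ⟨by linarith, by linarith⟩
    have hcpos : 0 < Real.cos φ := by nlinarith
    exact ⟨hd, hcpos⟩
  have hderiv : ∀ φ ∈ Set.Icc (-(π / 4) + η) (π / 4 - η),
      HasDerivWithinAt
        (fun t => t + h * k * (2 * Real.sin t * (R + Real.cos t) - 2 * x * Real.cos t) /
          (Real.sin t ^ 2 - Real.cos t ^ 2))
        ((fun φ => 1 +
          ((h * k * (2 * Real.cos φ * (R + Real.cos φ) + 2 * Real.sin φ * (-Real.sin φ) -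
              2 * x * (-Real.sin φ))) * (Real.sin φ ^ 2 - Real.cos φ ^ 2) -
            (h * k * (2 * Real.sin φ * (R + Real.cos φ) - 2 * x * Real.cos φ)) *
              (2 * Real.sin φ * Real.cos φ - 2 * Real.cos φ * (-Real.sin φ))) /
          (Real.sin φ ^ 2 - Real.cos φ ^ 2) ^ 2) φ)
        (Set.Icc (-(π / 4) + η) (π / 4 - η)) φ := by
    intro φ hφ
    obtain ⟨hd, hcpos⟩ := hfacts φ hφ
    have hpyth := Real.sin_sq_add_cos_sq φ
    have hDne : Real.sin φ ^ 2 - Real.cos φ ^ 2 ≠ 0 := by nlinarith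
    have hs := Real.hasDerivAt_sin φ
    have hc := Real.hasDerivAt_cos φ
    have hN : HasDerivAt (fun t => h * k * (2 * Real.sin t * (R + Real.cos t) - 2 * x * Real.cos t))
        (h * k * (2 * Real.cos φ * (R + Real.cos φ) + 2 * Real.sin φ * (-Real.sin φ) -
          2 * x * (-Real.sin φ))) φ := by
      have h1 : HasDerivAt (fun t => 2 * Real.sin t) (2 * Real.cos φ) φ := hs.const_mul 2
      have h2 : HasDerivAt (fun t => R + Real.cos t) (-Real.sin φ) φ := hc.const_add R
      have h3 := (h1.mul h2).sub (hc.const_mul (2 * x))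
      exact h3.const_mul (h * k)
    have hD : HasDerivAt (fun t => Real.sin t ^ 2 - Real.cos t ^ 2)
        (2 * Real.sin φ * Real.cos φ - 2 * Real.cos φ * (-Real.sin φ)) φ := by
      have h1 : HasDerivAt (fun t => Real.sin t ^ 2) (2 * Real.sin φ * Real.cos φ) φ := by
        have : HasDerivAt (fun t => Real.sin t ^ 2) _ φ := hs.pow 2
        convert this using 1
        push_cast
        ring
      have h2 : HasDerivAt (fun t => Real.cos t ^ 2) (2 * Real.cos φ * (-Real.sin φ)) φ := by
        have : HasDerivAt (fun t => Real.cos t ^ 2) _ φ := hc.pow 2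
        convert this using 1
        push_cast
        ring
      exact h1.sub h2
    exact ((hasDerivAt_id φ).add (hN.div hD hDne)).hasDerivWithinAt
  have hbound : ∀ φ ∈ Set.Icc (-(π / 4) + η) (π / 4 - η),
      ‖(fun φ => 1 +
          ((h * k * (2 * Real.cos φ * (R + Real.cos φ) + 2 * Real.sin φ * (-Real.sin φ) -
              2 * x * (-Real.sin φ))) * (Real.sin φ ^ 2 - Real.cos φ ^ 2) -
            (h * k * (2 * Real.sin φ * (R + Real.cos φ) - 2 * x * Real.cos φ)) *
              (2 * Real.sin φ * Real.cos φ - 2 * Real.cos φ * (-Real.sin φ))) /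
          (Real.sin φ ^ 2 - Real.cos φ ^ 2) ^ 2) φ‖ ≤ 1 - 2 * (h * k) := by
    intro φ hφ
    obtain ⟨hd, hcpos⟩ := hfacts φ hφ
    rw [Real.norm_eq_abs]
    exact heading_aux R x (Real.sin φ) (Real.cos φ) ε (h * k) hR hx1 hx2
      (Real.sin_sq_add_cos_sq φ) hcpos hd hεpos hε1 hupos hu
  have key := (convex_Icc (-(π / 4) + η) (π / 4 - η)).norm_image_sub_le_of_norm_hasDerivWithin_le
    hderiv hbound hφ₂ hφ₁
  simpa [Real.norm_eq_abs] using key
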